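/- arXiv:2206.08409 — 9 statements merged into one kernel-verified Lean document; each statement's English description precedes it below -/
import Mathlib

section
/- Let α : ℝ → ℝ be continuous, strictly increasing with α(0) = 0. Let H : ℝ → ℝ be continuous on [0,∞) and differentiable at every t > 0 (with right differentiability at 0 also allowed to be assumed), and suppose H'(t) ≥ -α(H(t)) for all t ≥ 0. If H(0) ≥ 0, then H(t) ≥ 0 for all t ≥ 0. -/
/-- Scalar differential-inequality forward-invariance lemma: if `α` is continuous,
strictly increasing with `α 0 = 0`, `H` is continuous on `[0, ∞)` and differentiable
(at every `t > 0`, and from the right at `0`) with `H' t ≥ -α (H t)` for all `t ≥ 0`,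
and `H 0 ≥ 0`, then `H t ≥ 0` for all `t ≥ 0`. -/
theorem statement0 (α H H' : ℝ → ℝ)
    (hα_cont : Continuous α) (hα_mono : StrictMono α) (hα0 : α 0 = 0)
    (hH_cont : ContinuousOn H (Set.Ici (0 : ℝ)))
    (hH_deriv : ∀ t > (0 : ℝ), HasDerivAt H (H' t) t)
    (hH_deriv0 : HasDerivWithinAt H (H' 0) (Set.Ici (0 : ℝ)) 0)
    (hineq : ∀ t ≥ (0 : ℝ), H' t ≥ -α (H t))
    (h0 : H 0 ≥ 0) :
    ∀ t ≥ (0 : ℝ), H t ≥ 0 := by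
  intro T hT
  by_contra hneg
  push_neg at hneg
  have hT0 : (0 : ℝ) < T := by
    rcases lt_or_eq_of_le hT with h | h
    · exact h
    · exfalso; rw [← h] at hneg; linarith
  -- S : times in [0,T] where H ≥ 0
  set S : Set ℝ := Set.Icc 0 T ∩ H ⁻¹' Set.Ici 0 with hS
  have hScl : IsClosed S := by
    apply ContinuousOn.preimage_isClosed_of_isClosed
      (hH_cont.mono (fun x hx => hx.1)) isClosed_Icc isClosed_Ici
  have h0S : (0 : ℝ) ∈ S := ⟨⟨le_refl 0, le_of_lt hT0⟩, h0⟩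
  have hSne : S.Nonempty := ⟨0, h0S⟩
  have hSbdd : BddAbove S := BddAbove.mono (fun x hx => hx.1) bddAbove_Icc
  set s := sSup S with hs
  have hsS : s ∈ S := hScl.csSup_mem hSne hSbdd
  have hs0 : 0 ≤ s := hsS.1.1
  have hsT : s ≤ T := hsS.1.2
  have hHs : 0 ≤ H s := hsS.2
  have hsltT : s < T := by
    rcases lt_or_eq_of_le hsT with h | h
    · exact h
    · exfalso; rw [h] at hHs; linarith
  -- H < 0 on (s, T]
  have hHneg : ∀ t, s < t → t ≤ T → H t < 0 := by
    intro t hst htT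
    by_contra hc
    push_neg at hc
    have : t ∈ S := ⟨⟨le_trans hs0 hst.le, htT⟩, hc⟩
    exact absurd (le_csSup hSbdd this) (not_le.mpr hst)
  -- H strictly mono on [s, T]
  have hmono : StrictMonoOn H (Set.Icc s T) := by
    apply StrictMonoOn.mono (s := Set.Icc s T) ?_ (le_refl _)
    apply strictMonoOn_of_deriv_pos (convex_Icc s T)
      (hH_cont.mono (fun x hx => le_trans hs0 hx.1))
    intro x hx
    rw [interior_Icc] at hx
    have hx0 : 0 < x := lt_of_le_of_lt hs0 hx.1
    have hd := (hH_deriv x hx0).deriv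
    rw [hd]
    have hHx : H x < 0 := hHneg x hx.1 hx.2.le
    have : α (H x) < 0 := by
      have := hα_mono hHx
      rwa [hα0] at this
    linarith [hineq x hx0.le]
  have := hmono ⟨le_refl s, hsT⟩ ⟨hsltT.le, le_refl T⟩ hsltT
  linarith
end

section
/- (Theorem 1, safety of ODEs via safety functions) Let n ∈ ℕ, let f : ℝⁿ → ℝⁿ be locally Lipschitz continuous, let h : ℝⁿ → ℝ be continuously differentiable, and let α : ℝ → ℝ be continuous, strictly increasing with α(0) = 0. Suppose that for all p ∈ ℝⁿ the Lie derivative satisfies Dh(p)(f(p)) ≥ -α(h(p)), where Dh(p) is the Fréchet derivative of h at p. Let x : ℝ → ℝⁿ be a solution of ẋ(t) = f(x(t)) for all t ≥ 0. If h(x(0)) ≥ 0, then h(x(t)) ≥ 0 for all t ≥ 0; that is, the set S = {p ∈ ℝⁿ : h(p) ≥ 0} is forward invariant. -/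
/-- Theorem 1: safety of ODEs via safety functions. If `h` is continuously
differentiable, `f` is locally Lipschitz, `α` is continuous, strictly increasing with
`α 0 = 0`, and the Lie derivative satisfies `Dh(p)(f(p)) ≥ -α (h p)` for all `p`,
then along any solution `x` of `ẋ = f(x)` with `h (x 0) ≥ 0` we have `h (x t) ≥ 0`
for all `t ≥ 0` (forward invariance of the 0-superlevel set of `h`). -/
theorem statement2 (n : ℕ)
    (f : EuclideanSpace ℝ (Fin n) → EuclideanSpace ℝ (Fin n))
    (h : EuclideanSpace ℝ (Fin n) → ℝ) (α : ℝ → ℝ)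
    (hf : LocallyLipschitz f) (hh : ContDiff ℝ 1 h)
    (hα_cont : Continuous α) (hα_mono : StrictMono α) (hα0 : α 0 = 0)
    (hsafe : ∀ p : EuclideanSpace ℝ (Fin n), fderiv ℝ h p (f p) ≥ -α (h p))
    (x : ℝ → EuclideanSpace ℝ (Fin n))
    (hx : ∀ t ≥ (0 : ℝ), HasDerivAt x (f (x t)) t)
    (h0 : h (x 0) ≥ 0) :
    ∀ t ≥ (0 : ℝ), h (x t) ≥ 0 := by
  by_contra hcon
  push_neg at hcon
  obtain ⟨t₁, ht₁0, ht₁⟩ := hcon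
  set y : ℝ → ℝ := fun t => h (x t) with hy
  -- derivative of y at points t ≥ 0
  have hyd : ∀ t ≥ (0:ℝ), HasDerivAt y (fderiv ℝ h (x t) (f (x t))) t := by
    intro t ht
    exact ((hh.differentiable one_ne_zero).differentiableAt.hasFDerivAt).comp_hasDerivAt t (hx t ht)
  have hycont : ContinuousOn y (Set.Icc 0 t₁) := by
    intro t ht
    exact ((hyd t ht.1).continuousAt).continuousWithinAt
  set S := Set.Icc (0:ℝ) t₁ ∩ y ⁻¹' Set.Ici 0 with hS
  have hSne : S.Nonempty := ⟨0, ⟨le_rfl, ht₁0⟩, h0⟩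
  have hSbdd : BddAbove S := ⟨t₁, fun t ht => ht.1.2⟩
  have hSclosed : IsClosed S :=
    hycont.preimage_isClosed_of_isClosed isClosed_Icc isClosed_Ici
  set t₀ := sSup S with ht₀
  have ht₀S : t₀ ∈ S := hSclosed.csSup_mem hSne hSbdd
  have ht₀0 : (0:ℝ) ≤ t₀ := ht₀S.1.1
  have hyt₀ : 0 ≤ y t₀ := ht₀S.2
  have ht₀lt : t₀ < t₁ := lt_of_le_of_ne ht₀S.1.2 (by
    intro hE; rw [hE] at hyt₀; exact absurd ht₁ (not_lt.2 hyt₀))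
  have hneg : ∀ t ∈ Set.Ioc t₀ t₁, y t < 0 := by
    intro t ht
    by_contra hge
    push_neg at hge
    have : t ∈ S := ⟨⟨le_trans ht₀0 ht.1.le, ht.2⟩, hge⟩
    exact absurd (le_csSup hSbdd this) (not_le.2 ht.1)
  have hmono : StrictMonoOn y (Set.Icc t₀ t₁) := by
    apply strictMonoOn_of_deriv_pos (convex_Icc t₀ t₁)
      (hycont.mono (Set.Icc_subset_Icc_left ht₀0))
    intro t ht
    rw [interior_Icc] at ht
    have ht0 : (0:ℝ) ≤ t := le_trans ht₀0 ht.1.le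
    have hd := hyd t ht0
    rw [hd.deriv]
    have hyneg : y t < 0 := hneg t ⟨ht.1, ht.2.le⟩
    have : α (y t) < 0 := by
      have := hα_mono hyneg
      rwa [hα0] at this
    have := hsafe (x t)
    linarith
  have := hmono (Set.left_mem_Icc.2 ht₀lt.le) (Set.right_mem_Icc.2 ht₀lt.le) ht₀lt
  linarith
end

section
/- (Theorem 2, safety-critical control via control barrier functions) Let n, m ∈ ℕ, let f : ℝⁿ → ℝⁿ and g : ℝⁿ → L(ℝᵐ, ℝⁿ) be locally Lipschitz continuous, let k : ℝⁿ → ℝᵐ be locally Lipschitz continuous, let h : ℝⁿ → ℝ be continuously differentiable, and let α : ℝ → ℝ be continuous, strictly increasing with α(0) = 0. Suppose that for all p ∈ ℝⁿ, Dh(p)(f(p) + g(p)(k(p))) ≥ -α(h(p)). Let x : ℝ → ℝⁿ be a solution of the closed-loop system ẋ(t) = f(x(t)) + g(x(t))(k(x(t))) for all t ≥ 0. If h(x(0)) ≥ 0, then h(x(t)) ≥ 0 for all t ≥ 0; that is, the set S = {p ∈ ℝⁿ : h(p) ≥ 0} is forward invariant under the closed-loop dynamics. -/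
/-- Theorem 2: safety-critical control via control barrier functions. For the affine
control system `ẋ = f(x) + g(x) u` with locally Lipschitz feedback `u = k(x)`
satisfying `Dh(p)(f(p) + g(p)(k(p))) ≥ -α (h p)` for all `p`, the 0-superlevel set of
`h` is forward invariant under the closed-loop dynamics. -/
theorem statement3 (n m : ℕ)
    (f : EuclideanSpace ℝ (Fin n) → EuclideanSpace ℝ (Fin n))
    (g : EuclideanSpace ℝ (Fin n) → (EuclideanSpace ℝ (Fin m) →L[ℝ] EuclideanSpace ℝ (Fin n)))
    (k : EuclideanSpace ℝ (Fin n) → EuclideanSpace ℝ (Fin m))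
    (h : EuclideanSpace ℝ (Fin n) → ℝ) (α : ℝ → ℝ)
    (hf : LocallyLipschitz f) (hg : LocallyLipschitz g) (hk : LocallyLipschitz k)
    (hh : ContDiff ℝ 1 h)
    (hα_cont : Continuous α) (hα_mono : StrictMono α) (hα0 : α 0 = 0)
    (hsafe : ∀ p : EuclideanSpace ℝ (Fin n), fderiv ℝ h p (f p + g p (k p)) ≥ -α (h p))
    (x : ℝ → EuclideanSpace ℝ (Fin n))
    (hx : ∀ t ≥ (0 : ℝ), HasDerivAt x (f (x t) + g (x t) (k (x t))) t)
    (h0 : h (x 0) ≥ 0) :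
    ∀ t ≥ (0 : ℝ), h (x t) ≥ 0 := by
  set y : ℝ → ℝ := fun t => h (x t) with hy
  -- derivative of y at t ≥ 0
  have hyderiv : ∀ t ≥ (0 : ℝ),
      HasDerivAt y (fderiv ℝ h (x t) (f (x t) + g (x t) (k (x t)))) t := by
    intro t ht
    exact ((hh.differentiable one_ne_zero (x t)).hasFDerivAt).comp_hasDerivAt t (hx t ht)
  by_contra hcon
  push_neg at hcon
  obtain ⟨t₁, ht₁, hyt₁⟩ := hcon
  have ht₁0 : (0:ℝ) < t₁ := by
    rcases lt_or_eq_of_le ht₁ with h' | h'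
    · exact h'
    · exfalso; rw [← h'] at hyt₁; exact absurd h0 (not_le.2 hyt₁)
  set S : Set ℝ := {t | t ∈ Set.Icc (0:ℝ) t₁ ∧ y t ≥ 0} with hS
  have hSne : S.Nonempty := ⟨0, ⟨le_rfl, le_of_lt ht₁0⟩, h0⟩
  have hSbdd : BddAbove S := ⟨t₁, fun t ht => ht.1.2⟩
  set s := sSup S with hs
  have hscl : s ∈ closure S := csSup_mem_closure hSne hSbdd
  have hSsub : S ⊆ Set.Icc 0 t₁ := fun t ht => ht.1
  have hsIcc : s ∈ Set.Icc (0:ℝ) t₁ :=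
    isClosed_Icc.closure_subset ((closure_mono hSsub) hscl)
  -- y continuous at every point ≥ 0
  have hycont : ∀ t ≥ (0:ℝ), ContinuousAt y t := fun t ht =>
    (hyderiv t ht).continuousAt
  -- y s ≥ 0
  have hys : y s ≥ 0 := by
    haveI := mem_closure_iff_nhdsWithin_neBot.1 hscl
    have hcw : ContinuousWithinAt y S s := (hycont s hsIcc.1).continuousWithinAt
    refine ge_of_tendsto hcw ?_
    filter_upwards [self_mem_nhdsWithin] with t ht using ht.2
  have hst₁ : s < t₁ := by
    rcases lt_or_eq_of_le hsIcc.2 with h' | h'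
    · exact h'
    · exfalso; rw [h'] at hys; exact absurd hys (not_le.2 hyt₁)
  -- on (s, t₁], y < 0
  have hneg : ∀ t, s < t → t ≤ t₁ → y t < 0 := by
    intro t hst htt₁
    by_contra hge
    push_neg at hge
    have : t ∈ S := ⟨⟨le_trans hsIcc.1 (le_of_lt hst), htt₁⟩, hge⟩
    exact absurd (le_csSup hSbdd this) (not_le.2 hst)
  -- strict mono on [s, t₁]
  have hmono : StrictMonoOn y (Set.Icc s t₁) := by
    apply strictMonoOn_of_deriv_pos (convex_Icc s t₁)
    · intro t ht
      exact (hycont t (le_trans hsIcc.1 ht.1)).continuousWithinAt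
    · intro t ht
      rw [interior_Icc] at ht
      have ht0 : (0:ℝ) ≤ t := le_trans hsIcc.1 (le_of_lt ht.1)
      have hd := hyderiv t ht0
      rw [hd.deriv]
      have hylt : y t < 0 := hneg t ht.1 (le_of_lt ht.2)
      have : α (y t) < α 0 := hα_mono hylt
      rw [hα0] at this
      calc (0:ℝ) < -α (y t) := by linarith
        _ ≤ _ := hsafe (x t)
  have := hmono ⟨le_rfl, le_of_lt hst₁⟩ ⟨le_of_lt hst₁, le_rfl⟩ hst₁
  linarith
end

section
/- (History-segment differentiability, used in the proof of Theorem 4) Let E be a real Banach space, τ > 0, and let x : ℝ → E be continuously differentiable. For each t ∈ ℝ define the history segment x_t ∈ C([-τ,0], E) by x_t(θ) = x(t+θ), and define ẋ_t ∈ C([-τ,0], E) by ẋ_t(θ) = x'(t+θ), where C([-τ,0], E) carries the supremum norm. Then the map t ↦ x_t from ℝ to C([-τ,0], E) is differentiable at every t ∈ ℝ, with derivative equal to ẋ_t. -/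
/-- History segment `x_t ∈ C([-τ,0], E)` of a continuous curve `x : ℝ → E`,
defined by `x_t θ = x (t + θ)`. -/
noncomputable def histSegment {E : Type*} [NormedAddCommGroup E]
    (τ : ℝ) (x : ℝ → E) (hx : Continuous x) (t : ℝ) :
    C(Set.Icc (-τ) (0 : ℝ), E) :=
  ⟨fun θ => x (t + θ), hx.comp (continuous_const.add continuous_subtype_val)⟩

/-- History-segment differentiability: if `x : ℝ → E` is continuously differentiable
(with continuous derivative `x'`), then the curve `t ↦ x_t` in `C([-τ,0], E)`
(supremum norm) is differentiable at every `t`, with derivative `ẋ_t : θ ↦ x' (t+θ)`. -/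
theorem statement5 (E : Type*) [NormedAddCommGroup E] [NormedSpace ℝ E] [CompleteSpace E]
    (τ : ℝ) (hτ : 0 < τ)
    (x x' : ℝ → E) (hx : Continuous x) (hx' : Continuous x')
    (hd : ∀ t : ℝ, HasDerivAt x (x' t) t) :
    ∀ t : ℝ, HasDerivAt (fun s => histSegment τ x hx s) (histSegment τ x' hx' t) t := by
  intro t
  rw [hasDerivAt_iff_isLittleO]
  rw [Asymptotics.isLittleO_iff]
  intro ε hε
  -- uniform continuity of x' on a compact interval around [t-τ, t]
  set K : Set ℝ := Set.Icc (t - τ - 1) (t + 1) with hK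
  have hKc : IsCompact K := isCompact_Icc
  have huc : UniformContinuousOn x' K := hKc.uniformContinuousOn_of_continuous hx'.continuousOn
  rw [Metric.uniformContinuousOn_iff] at huc
  obtain ⟨δ, hδ, hδe⟩ := huc ε hε
  have hmin : 0 < min δ 1 := lt_min hδ one_pos
  rw [Metric.eventually_nhds_iff]
  refine ⟨min δ 1, hmin, fun s hs => ?_⟩
  have hst : |s - t| < min δ 1 := by rwa [Real.dist_eq] at hs
  have hst1 : |s - t| < 1 := lt_of_lt_of_le hst (min_le_right _ _)
  have hstδ : |s - t| < δ := lt_of_lt_of_le hst (min_le_left _ _)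
  have key : ∀ θ : Set.Icc (-τ) (0 : ℝ),
      ‖x (s + θ) - x (t + θ) - (s - t) • x' (t + θ)‖ ≤ ε * |s - t| := by
    intro ⟨θ, hθ1, hθ2⟩
    simp only
    -- mean value inequality on uIcc (t+θ) (s+θ)
    set c := x' (t + θ) with hc
    have habs := abs_lt.mp hst1
    have hsub : Set.uIcc (t + θ) (s + θ) ⊆ K := by
      apply Set.uIcc_subset_Icc
      · exact Set.mem_Icc.mpr ⟨by linarith, by linarith⟩
      · exact Set.mem_Icc.mpr ⟨by linarith [habs.1], by linarith [habs.2]⟩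
    have hderiv : ∀ u ∈ Set.uIcc (t + θ) (s + θ),
        HasDerivWithinAt (fun u => x u - u • c) (x' u - c) (Set.uIcc (t + θ) (s + θ)) u := by
      intro u _
      have : HasDerivAt (fun u : ℝ => x u - u • c) (x' u - (1 : ℝ) • c) u :=
        (hd u).sub ((hasDerivAt_id u).smul_const c)
      simpa using this.hasDerivWithinAt
    have hbound : ∀ u ∈ Set.uIcc (t + θ) (s + θ), ‖x' u - c‖ ≤ ε := by
      intro u hu
      have huK : u ∈ K := hsub hu
      have htθK : t + θ ∈ K := hsub (Set.left_mem_uIcc)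
      have hdist : dist u (t + θ) < δ := by
        have h1 : u ∈ Set.uIcc (t + θ) (s + θ) := hu
        rw [Set.uIcc_eq_union] at h1
        have : dist u (t + θ) ≤ dist (s + θ) (t + θ) := by
          rcases h1 with h | h
          · rw [Real.dist_eq, Real.dist_eq]
            rcases Set.mem_Icc.mp h with ⟨ha, hb⟩
            rw [abs_sub_le_iff]
            constructor
            · calc u - (t + θ) ≤ (s + θ) - (t + θ) := by linarith
                _ ≤ |(s + θ) - (t + θ)| := le_abs_self _
            · calc t + θ - u ≤ 0 := by linarith
                _ ≤ |(s + θ) - (t + θ)| := abs_nonneg _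
          · rw [Real.dist_eq, Real.dist_eq]
            rcases Set.mem_Icc.mp h with ⟨ha, hb⟩
            rw [abs_sub_le_iff]
            constructor
            · calc u - (t + θ) ≤ 0 := by linarith
                _ ≤ |(s + θ) - (t + θ)| := abs_nonneg _
            · calc t + θ - u ≤ (t + θ) - (s + θ) := by linarith
                _ = -((s + θ) - (t + θ)) := by ring
                _ ≤ |(s + θ) - (t + θ)| := neg_le_abs _
        have h2 : dist (s + θ) (t + θ) < δ := by
          rw [Real.dist_eq]
          have : s + θ - (t + θ) = s - t := by ring
          rw [this]; exact hstδ
        linarith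
      exact le_of_lt ((dist_eq_norm (x' u) c) ▸ hδe u huK (t + θ) htθK hdist)
    have := (convex_uIcc (t + θ) (s + θ)).norm_image_sub_le_of_norm_hasDerivWithin_le
      hderiv hbound Set.left_mem_uIcc Set.right_mem_uIcc
    calc ‖x (s + θ) - x (t + θ) - (s - t) • c‖
        = ‖(x (s + θ) - (s + θ) • c) - (x (t + θ) - (t + θ) • c)‖ := by
          congr 1
          have : (s - t) • c = (s + θ) • c - (t + θ) • c := by
            rw [← sub_smul]; congr 1; ring
          rw [this]; abel
      _ ≤ ε * ‖(s + θ) - (t + θ)‖ := this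
      _ = ε * |s - t| := by rw [Real.norm_eq_abs]; congr 1; congr 1; ring
  have hnn : (0 : ℝ) ≤ ε * |s - t| := mul_nonneg (le_of_lt hε) (abs_nonneg _)
  have : ‖(fun s => histSegment τ x hx s) s - (fun s => histSegment τ x hx s) t
      - (s - t) • histSegment τ x' hx' t‖ ≤ ε * |s - t| := by
    rw [ContinuousMap.norm_le _ hnn]
    intro θ
    simp only [ContinuousMap.sub_apply, ContinuousMap.smul_apply, histSegment,
      ContinuousMap.coe_mk]
    exact key θ
  calc ‖(fun s => histSegment τ x hx s) s - (fun s => histSegment τ x hx s) t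
      - (s - t) • histSegment τ x' hx' t‖ ≤ ε * |s - t| := this
    _ = ε * ‖s - t‖ := by rw [Real.norm_eq_abs]
end

section
/- (Theorem 4, chain-rule form: time derivative of a functional along a solution) Let E be a real Banach space, τ > 0, and let x : ℝ → E be continuously differentiable. Let 𝓗 : C([-τ,0], E) → ℝ be Fréchet differentiable, where C([-τ,0], E) carries the supremum norm. Then for every t ∈ ℝ, the function t ↦ 𝓗(x_t) is differentiable at t, and its derivative equals D𝓗(x_t)(ẋ_t), the Fréchet derivative of 𝓗 at x_t applied to the continuous function ẋ_t : θ ↦ x'(t+θ). -/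
theorem segDeriv (E : Type*) [NormedAddCommGroup E] [NormedSpace ℝ E] [CompleteSpace E]
    (τ : ℝ) (hτ : 0 < τ)
    (x x' : ℝ → E) (hx : Continuous x) (hx' : Continuous x')
    (hd : ∀ t : ℝ, HasDerivAt x (x' t) t) (t : ℝ) :
    HasDerivAt (fun s => histSegment τ x hx s) (histSegment τ x' hx' t) t := by
  rw [hasDerivAt_iff_isLittleO]
  rw [Asymptotics.isLittleO_iff]
  intro ε hε
  -- uniform continuity of x' on compact
  obtain ⟨δ, hδ, hunif⟩ := Metric.uniformContinuousOn_iff_le.mp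
    ((isCompact_Icc (a := t - τ - 1) (b := t + 1)).uniformContinuousOn_of_continuous
      hx'.continuousOn) ε hε
  have hmem : ∀ᶠ s in nhds t, |s - t| < min δ 1 := by
    have := Metric.ball_mem_nhds t (lt_min hδ one_pos)
    filter_upwards [this] with s hs
    simpa [Real.dist_eq] using hs
  filter_upwards [hmem] with s hs
  rw [Real.norm_eq_abs]
  have hεst : (0:ℝ) ≤ ε * |s - t| := mul_nonneg hε.le (abs_nonneg _)
  rw [ContinuousMap.norm_le _ hεst]
  rintro ⟨θ, hθ1, hθ2⟩
  have key : ∀ u ∈ Set.uIcc (t + θ) (s + θ), u ∈ Set.Icc (t - τ - 1) (t + 1) := by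
    intro u hu
    have h1 : t + θ ∈ Set.Icc (t - τ - 1) (t + 1) := by
      constructor <;> linarith
    have h2 : s + θ ∈ Set.Icc (t - τ - 1) (t + 1) := by
      have := abs_lt.mp (hs.trans_le (min_le_right _ _))
      constructor <;> linarith
    rcases Set.uIcc_subset_Icc h1 h2 hu with ⟨hl, hr⟩
    exact ⟨hl, hr⟩
  -- FTC
  have hint : ∀ a b : ℝ, x b - x a = ∫ u in a..b, x' u := by
    intro a b
    rw [intervalIntegral.integral_eq_sub_of_hasDerivAt (fun u _ => hd u)
      (hx'.intervalIntegrable a b)]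
  have happ : ((fun s => histSegment τ x hx s) s - histSegment τ x hx t
      - (s - t) • histSegment τ x' hx' t) ⟨θ, hθ1, hθ2⟩
      = x (s + θ) - x (t + θ) - (s - t) • x' (t + θ) := by
    simp [histSegment]
  rw [happ]
  have heq : x (s + θ) - x (t + θ) - (s - t) • x' (t + θ)
      = ∫ u in (t+θ)..(s+θ), (x' u - x' (t + θ)) := by
    rw [intervalIntegral.integral_sub (hx'.intervalIntegrable _ _)
      (intervalIntegrable_const), intervalIntegral.integral_const, ← hint]
    ring_nf
  rw [heq]
  have hb : ∀ u ∈ Set.uIcc (t + θ) (s + θ), ‖x' u - x' (t + θ)‖ ≤ ε := by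
    intro u hu
    have h1 := key u hu
    have h2 := key (t + θ) Set.left_mem_uIcc
    have hdist : dist u (t + θ) ≤ δ := by
      have h5 := le_abs_self (s - t)
      have h6 := neg_abs_le (s - t)
      have h7 := abs_nonneg (s - t)
      have : |u - (t + θ)| ≤ |s - t| := by
        rcases Set.mem_uIcc.mp hu with ⟨h3, h4⟩ | ⟨h3, h4⟩ <;>
          rw [abs_le] <;> constructor <;> linarith
      rw [Real.dist_eq]
      exact this.trans ((hs.trans_le (min_le_left _ _)).le)
    simpa [dist_eq_norm] using hunif u h1 (t + θ) h2 hdist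
  calc ‖∫ u in (t+θ)..(s+θ), (x' u - x' (t + θ))‖
      ≤ ε * |(s + θ) - (t + θ)| :=
        intervalIntegral.norm_integral_le_of_norm_le_const
          (fun u hu => hb u (Set.uIoc_subset_uIcc hu))
    _ = ε * |s - t| := by ring_nf

/-- Theorem 4 (chain-rule form): for a continuously differentiable `x : ℝ → E` and a
Fréchet differentiable functional `𝓗 : C([-τ,0], E) → ℝ` (sup norm), the function
`t ↦ 𝓗(x_t)` is differentiable with derivative `D𝓗(x_t)(ẋ_t)`. -/
theorem statement6 (E : Type*) [NormedAddCommGroup E] [NormedSpace ℝ E] [CompleteSpace E]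
    (τ : ℝ) (hτ : 0 < τ)
    (x x' : ℝ → E) (hx : Continuous x) (hx' : Continuous x')
    (hd : ∀ t : ℝ, HasDerivAt x (x' t) t)
    (H : C(Set.Icc (-τ) (0 : ℝ), E) → ℝ)
    (DH : C(Set.Icc (-τ) (0 : ℝ), E) → (C(Set.Icc (-τ) (0 : ℝ), E) →L[ℝ] ℝ))
    (hH : ∀ φ : C(Set.Icc (-τ) (0 : ℝ), E), HasFDerivAt H (DH φ) φ) :
    ∀ t : ℝ, HasDerivAt (fun s => H (histSegment τ x hx s))
      (DH (histSegment τ x hx t) (histSegment τ x' hx' t)) t := by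
  intro t
  exact (hH (histSegment τ x hx t)).comp_hasDerivAt t
    (segDeriv E τ hτ x x' hx hx' hd t)
end

section
/- (Theorem 3, safety of retarded functional differential equations via safety functionals) Let E be a real Banach space, τ > 0, and 𝓕 : C([-τ,0], E) → E. Let x : ℝ → E be continuously differentiable and satisfy ẋ(t) = 𝓕(x_t) for all t ≥ 0, where x_t(θ) = x(t+θ). Let 𝓗 : C([-τ,0], E) → ℝ be Fréchet differentiable and let α : ℝ → ℝ be continuous, strictly increasing with α(0) = 0. Suppose that for all t ≥ 0, D𝓗(x_t)(ẋ_t) ≥ -α(𝓗(x_t)), where ẋ_t(θ) = x'(t+θ). If 𝓗(x_0) ≥ 0, then 𝓗(x_t) ≥ 0 for all t ≥ 0; that is, the solution remains in the safe set 𝓢 = {φ ∈ C([-τ,0], E) : 𝓗(φ) ≥ 0}. -/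
/-- The history-segment curve is differentiable, with derivative the history
segment of the derivative. -/
theorem hasDerivAt_histSegment {E : Type*} [NormedAddCommGroup E] [NormedSpace ℝ E]
    (τ : ℝ) (x x' : ℝ → E) (hx : Continuous x) (hx' : Continuous x')
    (hd : ∀ t : ℝ, HasDerivAt x (x' t) t) (t : ℝ) :
    HasDerivAt (histSegment τ x hx) (histSegment τ x' hx' t) t := by
  rw [hasDerivAt_iff_isLittleO, Asymptotics.isLittleO_iff]
  intro ε hε
  obtain ⟨δ, hδpos, hδ⟩ := Metric.uniformContinuousOn_iff_le.mp
    ((isCompact_Icc (a := t - τ - 1) (b := t + 1)).uniformContinuousOn_of_continuous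
      hx'.continuousOn) ε hε
  have hδ1 : (0 : ℝ) < min δ 1 := lt_min hδpos one_pos
  rw [Metric.eventually_nhds_iff]
  refine ⟨min δ 1, hδ1, ?_⟩
  intro s hs
  rw [Real.dist_eq] at hs
  have hst : |s - t| ≤ min δ 1 := le_of_lt hs
  have key : ∀ θ : Set.Icc (-τ) (0 : ℝ),
      ‖x (s + θ.1) - x (t + θ.1) - (s - t) • x' (t + θ.1)‖ ≤ ε * ‖s - t‖ := by
    intro θ
    obtain ⟨hθ1, hθ2⟩ := θ.2
    set c : E := x' (t + θ.1) with hc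
    set g : ℝ → E := fun v => x (v + θ.1) - v • c with hg
    have hmem : ∀ v ∈ Set.uIcc t s, v + θ.1 ∈ Set.Icc (t - τ - 1) (t + 1) := by
      intro v hv
      have h1 : |v - t| ≤ min δ 1 := by
        rcases Set.mem_uIcc.mp hv with ⟨h1, h2⟩ | ⟨h1, h2⟩ <;>
          (rw [abs_le]; constructor <;> nlinarith [abs_le.mp hst])
      have h2 := abs_le.mp (le_trans h1 (min_le_right _ _))
      exact ⟨by nlinarith [h2.1, h2.2], by nlinarith [h2.1, h2.2]⟩
    have hgd : ∀ v ∈ Set.uIcc t s,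
        HasDerivWithinAt g (x' (v + θ.1) - c) (Set.uIcc t s) v := by
      intro v _
      exact (((hd (v + θ.1)).comp_add_const v θ.1).sub
        ((hasDerivAt_id v).smul_const c)).hasDerivWithinAt.congr_deriv (by simp)
    have hbound : ∀ v ∈ Set.uIcc t s, ‖x' (v + θ.1) - c‖ ≤ ε := by
      intro v hv
      have hdist : dist (v + θ.1) (t + θ.1) ≤ δ := by
        rw [Real.dist_eq]
        have : |v - t| ≤ min δ 1 := by
          rcases Set.mem_uIcc.mp hv with ⟨h1, h2⟩ | ⟨h1, h2⟩ <;>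
            (rw [abs_le]; constructor <;> nlinarith [abs_le.mp hst])
        calc |v + θ.1 - (t + θ.1)| = |v - t| := by ring_nf
          _ ≤ δ := le_trans this (min_le_left _ _)
      have := hδ _ (hmem v hv) _ (hmem t (Set.left_mem_uIcc)) hdist
      rwa [dist_eq_norm] at this
    have := Convex.norm_image_sub_le_of_norm_hasDerivWithin_le hgd hbound
      (convex_uIcc t s) Set.left_mem_uIcc Set.right_mem_uIcc
    have heq : g s - g t = x (s + θ.1) - x (t + θ.1) - (s - t) • c := by
      simp only [hg, sub_smul]
      abel
    rwa [heq] at this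
  have hnn : 0 ≤ ε * ‖s - t‖ := mul_nonneg (le_of_lt hε) (norm_nonneg _)
  calc ‖histSegment τ x hx s - histSegment τ x hx t - (s - t) • histSegment τ x' hx' t‖
      ≤ ε * ‖s - t‖ := by
        apply ContinuousMap.norm_le _ hnn |>.mpr
        intro θ
        simpa [histSegment] using key θ
    _ = ε * ‖s - t‖ := rfl

/-- Theorem 3: safety of retarded functional differential equations via safety
functionals. If `x` solves `ẋ(t) = 𝓕(x_t)` for `t ≥ 0`, `𝓗` is Fréchet
differentiable, `α` is continuous, strictly increasing with `α 0 = 0`, and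
`D𝓗(x_t)(ẋ_t) ≥ -α(𝓗(x_t))` for all `t ≥ 0`, then `𝓗(x_0) ≥ 0` implies
`𝓗(x_t) ≥ 0` for all `t ≥ 0`. -/
theorem statement8 (E : Type*) [NormedAddCommGroup E] [NormedSpace ℝ E] [CompleteSpace E]
    (τ : ℝ) (hτ : 0 < τ)
    (F : C(Set.Icc (-τ) (0 : ℝ), E) → E)
    (x x' : ℝ → E) (hx : Continuous x) (hx' : Continuous x')
    (hd : ∀ t : ℝ, HasDerivAt x (x' t) t)
    (hode : ∀ t ≥ (0 : ℝ), x' t = F (histSegment τ x hx t))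
    (H : C(Set.Icc (-τ) (0 : ℝ), E) → ℝ)
    (DH : C(Set.Icc (-τ) (0 : ℝ), E) → (C(Set.Icc (-τ) (0 : ℝ), E) →L[ℝ] ℝ))
    (hH : ∀ φ : C(Set.Icc (-τ) (0 : ℝ), E), HasFDerivAt H (DH φ) φ)
    (α : ℝ → ℝ) (hα_cont : Continuous α) (hα_mono : StrictMono α) (hα0 : α 0 = 0)
    (hsafe : ∀ t ≥ (0 : ℝ),
      DH (histSegment τ x hx t) (histSegment τ x' hx' t) ≥ -α (H (histSegment τ x hx t)))
    (h0 : H (histSegment τ x hx 0) ≥ 0) :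
    ∀ t ≥ (0 : ℝ), H (histSegment τ x hx t) ≥ 0 := by
  set h : ℝ → ℝ := fun t => H (histSegment τ x hx t) with hhdef
  have hhd : ∀ t : ℝ, HasDerivAt h (DH (histSegment τ x hx t) (histSegment τ x' hx' t)) t :=
    fun t => (hH (histSegment τ x hx t)).comp_hasDerivAt t
      (hasDerivAt_histSegment τ x x' hx hx' hd t)
  have hcont : Continuous h := continuous_iff_continuousAt.mpr fun t => (hhd t).continuousAt
  intro t1 ht1
  by_contra hneg
  push_neg at hneg
  set S : Set ℝ := Set.Icc 0 t1 ∩ {t | 0 ≤ h t} with hS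
  have hSne : S.Nonempty := ⟨0, ⟨le_refl 0, ht1⟩, h0⟩
  have hSbdd : BddAbove S := ⟨t1, fun a ha => ha.1.2⟩
  have hSclosed : IsClosed S := isClosed_Icc.inter (isClosed_le continuous_const hcont)
  set t0 := sSup S with ht0def
  have ht0S : t0 ∈ S := hSclosed.csSup_mem hSne hSbdd
  have ht00 : (0 : ℝ) ≤ t0 := ht0S.1.1
  have ht0le : t0 ≤ t1 := ht0S.1.2
  have ht0h : 0 ≤ h t0 := ht0S.2
  have ht0lt : t0 < t1 := by
    rcases lt_or_eq_of_le ht0le with hlt | heq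
    · exact hlt
    · exact absurd (heq ▸ ht0h) (not_le.mpr hneg)
  have hneg' : ∀ z, t0 < z → z ≤ t1 → h z < 0 := by
    intro z hz1 hz2
    by_contra hge
    push_neg at hge
    have : z ∈ S := ⟨⟨le_trans ht00 (le_of_lt hz1), hz2⟩, hge⟩
    exact absurd (le_csSup hSbdd this) (not_le.mpr hz1)
  have hmono : StrictMonoOn h (Set.Icc t0 t1) := by
    apply strictMonoOn_of_deriv_pos (convex_Icc t0 t1) hcont.continuousOn
    intro z hz
    rw [interior_Icc] at hz
    have hz0 : (0 : ℝ) ≤ z := le_trans ht00 (le_of_lt hz.1)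
    have hzneg : h z < 0 := hneg' z hz.1 (le_of_lt hz.2)
    have hαneg : α (h z) < 0 := hα0 ▸ hα_mono hzneg
    have := hsafe z hz0
    rw [(hhd z).deriv]
    linarith
  have := hmono (Set.left_mem_Icc.mpr ht0le) (Set.right_mem_Icc.mpr ht0le) ht0lt
  linarith
end

section
/- (Corollary 3, safety of neutral functional differential equations) Let E be a real Banach space, τ > 0, and 𝓕 : C([-τ,0], E) × C([-τ,0], E) → E. Let x : ℝ → E be continuously differentiable and satisfy the neutral functional differential equation ẋ(t) = 𝓕(x_t, ẋ_t) for all t ≥ 0, where x_t(θ) = x(t+θ) and ẋ_t(θ) = x'(t+θ). Let 𝓗 : C([-τ,0], E) → ℝ be Fréchet differentiable and let α : ℝ → ℝ be continuous, strictly increasing with α(0) = 0. Suppose that for all t ≥ 0, D𝓗(x_t)(ẋ_t) ≥ -α(𝓗(x_t)). If 𝓗(x_0) ≥ 0, then 𝓗(x_t) ≥ 0 for all t ≥ 0. -/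
/-- The curve `t ↦ x_t` in `C([-τ,0], E)` is differentiable with derivative `ẋ_t`. -/
lemma segHasDeriv {E : Type*} [NormedAddCommGroup E] [NormedSpace ℝ E]
    (τ : ℝ) (x x' : ℝ → E) (hx : Continuous x) (hx' : Continuous x')
    (hd : ∀ t : ℝ, HasDerivAt x (x' t) t) (t : ℝ) :
    HasDerivAt (fun s => histSegment τ x hx s) (histSegment τ x' hx' t) t := by
  rw [hasDerivAt_iff_isLittleO, Asymptotics.isLittleO_iff]
  intro ε hε
  have hK : IsCompact (Set.Icc (t - τ - 1) (t + 1)) := isCompact_Icc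
  have hu : UniformContinuousOn x' (Set.Icc (t - τ - 1) (t + 1)) :=
    hK.uniformContinuousOn_of_continuous hx'.continuousOn
  rw [Metric.uniformContinuousOn_iff] at hu
  obtain ⟨δ, hδ, hδ'⟩ := hu ε hε
  have hmem : Metric.ball t (min δ 1) ∈ nhds t := Metric.ball_mem_nhds t (lt_min hδ one_pos)
  filter_upwards [hmem] with s hs
  have hus : |s - t| < min δ 1 := by rwa [Metric.mem_ball, Real.dist_eq] at hs
  have hnn : 0 ≤ ε * ‖s - t‖ := mul_nonneg hε.le (norm_nonneg _)
  refine (ContinuousMap.norm_le _ hnn).mpr ?_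
  rintro ⟨θ, hθ⟩
  simp only [ContinuousMap.sub_apply, ContinuousMap.smul_apply, histSegment,
    ContinuousMap.coe_mk]
  set a := t + θ with ha
  set u := s - t with hu'
  have hθτ : -τ ≤ θ ∧ θ ≤ 0 := hθ
  have haK : a ∈ Set.Icc (t - τ - 1) (t + 1) := by
    constructor <;> simp only [ha] <;> linarith [hθτ.1, hθτ.2]
  have key : ∀ v ∈ Set.uIcc (0 : ℝ) u,
      HasDerivWithinAt (fun v => x (a + v) - v • x' a) (x' (a + v) - x' a)
        (Set.uIcc (0 : ℝ) u) v := by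
    intro v _
    have h0 : HasDerivAt (fun w : ℝ => a + w) 1 v := by
      simpa using (hasDerivAt_id v).const_add a
    have h1 : HasDerivAt (fun w => x (a + w)) (x' (a + v)) v := by
      simpa [Function.comp_def] using HasDerivAt.scomp v (hd (a + v)) h0
    have h2 : HasDerivAt (fun v : ℝ => v • x' a) (x' a) v := by
      simpa using (hasDerivAt_id v).smul_const (x' a)
    exact (h1.sub h2).hasDerivWithinAt
  have bound : ∀ v ∈ Set.uIcc (0 : ℝ) u, ‖x' (a + v) - x' a‖ ≤ ε := by
    intro v hv
    have hvu : |v| ≤ |u| := by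
      rcases Set.mem_uIcc.mp hv with h | h
      · rw [abs_of_nonneg h.1, abs_of_nonneg (h.1.trans h.2)]; exact h.2
      · rw [abs_of_nonpos h.2]
        calc -v ≤ -u := by linarith [h.1]
        _ ≤ |u| := neg_le_abs u
    have hv1 : |v| < 1 := lt_of_le_of_lt hvu (lt_of_lt_of_le hus (min_le_right _ _))
    have havK : a + v ∈ Set.Icc (t - τ - 1) (t + 1) := by
      rcases abs_lt.mp hv1 with ⟨hl, hr⟩
      constructor <;> simp only [ha] <;> linarith [hθτ.1, hθτ.2]
    have hdist : dist (a + v) a < δ := by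
      rw [Real.dist_eq]
      simp only [add_sub_cancel_left]
      exact lt_of_le_of_lt hvu (lt_of_lt_of_le hus (min_le_left _ _))
    have := hδ' (a + v) havK a haK hdist
    rw [dist_eq_norm] at this
    exact this.le
  have hmvt := (convex_uIcc (0 : ℝ) u).norm_image_sub_le_of_norm_hasDerivWithin_le
    key bound Set.left_mem_uIcc Set.right_mem_uIcc
  -- hmvt : ‖(x (a + u) - u • x' a) - (x (a + 0) - 0 • x' a)‖ ≤ ε * ‖u - 0‖
  have he1 : s + θ = a + u := by rw [ha, hu']; ring
  have goal_eq : x (s + θ) - x (t + θ) - (s - t) • x' (t + θ)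
      = (x (a + u) - u • x' a) - (x (a + 0) - (0 : ℝ) • x' a) := by
    rw [he1]
    simp only [add_zero, zero_smul, sub_zero, ha, hu']
    abel
  rw [goal_eq]
  calc ‖(x (a + u) - u • x' a) - (x (a + 0) - (0 : ℝ) • x' a)‖ ≤ ε * ‖u - 0‖ := hmvt
  _ = ε * ‖s - t‖ := by rw [sub_zero, hu']

/-- Comparison lemma: if `h' t ≥ -α (h t)` for `t ≥ 0` where `α` is strictly
monotone with `α 0 = 0`, and `h 0 ≥ 0`, then `h t ≥ 0` for `t ≥ 0`. -/
lemma comparisonLemma (h h' : ℝ → ℝ) (hder : ∀ s : ℝ, HasDerivAt h (h' s) s)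
    (α : ℝ → ℝ) (hα_mono : StrictMono α) (hα0 : α 0 = 0)
    (hsafe : ∀ t ≥ (0 : ℝ), h' t ≥ -α (h t)) (h0 : h 0 ≥ 0) :
    ∀ t ≥ (0 : ℝ), h t ≥ 0 := by
  have hcont : Continuous h := by
    rw [continuous_iff_continuousAt]; exact fun s => (hder s).continuousAt
  intro t₁ ht₁
  by_contra hneg
  push_neg at hneg
  set S := {s : ℝ | s ∈ Set.Icc 0 t₁ ∧ 0 ≤ h s} with hS
  have hScl : IsClosed S := by
    have : S = Set.Icc 0 t₁ ∩ h ⁻¹' Set.Ici 0 := by ext s; simp [hS, Set.mem_Ici]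
    rw [this]
    exact isClosed_Icc.inter (isClosed_Ici.preimage hcont)
  have hS0 : (0 : ℝ) ∈ S := ⟨⟨le_refl 0, ht₁⟩, h0⟩
  have hbdd : BddAbove S := ⟨t₁, fun s hs => hs.1.2⟩
  have ht₀S : sSup S ∈ S := hScl.csSup_mem ⟨0, hS0⟩ hbdd
  have ht₀le : sSup S ≤ t₁ := ht₀S.1.2
  have ht₀0 : 0 ≤ sSup S := le_csSup hbdd hS0
  have ht₀lt : sSup S < t₁ :=
    lt_of_le_of_ne ht₀le (fun heq => absurd (heq ▸ ht₀S.2) (not_le.mpr hneg))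
  have hmono : StrictMonoOn h (Set.Icc (sSup S) t₁) := by
    apply strictMonoOn_of_deriv_pos (convex_Icc _ _) hcont.continuousOn
    intro s hs
    rw [interior_Icc] at hs
    have hsneg : h s < 0 := by
      by_contra hge
      push_neg at hge
      have : s ∈ S := ⟨⟨ht₀0.trans hs.1.le, hs.2.le⟩, hge⟩
      exact absurd (le_csSup hbdd this) (not_le.mpr hs.1)
    have hs0 : (0 : ℝ) ≤ s := ht₀0.trans hs.1.le
    have hα : α (h s) < 0 := by
      have := hα_mono hsneg
      rwa [hα0] at this
    rw [(hder s).deriv]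
    have := hsafe s hs0
    linarith
  have hlt : h (sSup S) < h t₁ :=
    hmono ⟨le_refl _, ht₀le⟩ ⟨ht₀le, le_refl _⟩ ht₀lt
  linarith [ht₀S.2]

/-- Corollary 3: safety of neutral functional differential equations. If `x` solves
`ẋ(t) = 𝓕(x_t, ẋ_t)` for `t ≥ 0`, `𝓗` is Fréchet differentiable, `α` is continuous,
strictly increasing with `α 0 = 0`, and `D𝓗(x_t)(ẋ_t) ≥ -α(𝓗(x_t))` for all
`t ≥ 0`, then `𝓗(x_0) ≥ 0` implies `𝓗(x_t) ≥ 0` for all `t ≥ 0`. -/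
theorem statement9 (E : Type*) [NormedAddCommGroup E] [NormedSpace ℝ E] [CompleteSpace E]
    (τ : ℝ) (hτ : 0 < τ)
    (F : C(Set.Icc (-τ) (0 : ℝ), E) → C(Set.Icc (-τ) (0 : ℝ), E) → E)
    (x x' : ℝ → E) (hx : Continuous x) (hx' : Continuous x')
    (hd : ∀ t : ℝ, HasDerivAt x (x' t) t)
    (hode : ∀ t ≥ (0 : ℝ), x' t = F (histSegment τ x hx t) (histSegment τ x' hx' t))
    (H : C(Set.Icc (-τ) (0 : ℝ), E) → ℝ)
    (DH : C(Set.Icc (-τ) (0 : ℝ), E) → (C(Set.Icc (-τ) (0 : ℝ), E) →L[ℝ] ℝ))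
    (hH : ∀ φ : C(Set.Icc (-τ) (0 : ℝ), E), HasFDerivAt H (DH φ) φ)
    (α : ℝ → ℝ) (hα_cont : Continuous α) (hα_mono : StrictMono α) (hα0 : α 0 = 0)
    (hsafe : ∀ t ≥ (0 : ℝ),
      DH (histSegment τ x hx t) (histSegment τ x' hx' t) ≥ -α (H (histSegment τ x hx t)))
    (h0 : H (histSegment τ x hx 0) ≥ 0) :
    ∀ t ≥ (0 : ℝ), H (histSegment τ x hx t) ≥ 0 := by
  have hder : ∀ s : ℝ, HasDerivAt (fun r => H (histSegment τ x hx r))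
      (DH (histSegment τ x hx s) (histSegment τ x' hx' s)) s := fun s =>
    (hH (histSegment τ x hx s)).comp_hasDerivAt s (segHasDeriv τ x x' hx hx' hd s)
  exact comparisonLemma (fun r => H (histSegment τ x hx r))
    (fun r => DH (histSegment τ x hx r) (histSegment τ x' hx' r))
    hder α hα_mono hα0 hsafe h0
end

section
/- (Theorem 5, safety-critical control of time delay systems via control barrier functionals) Let E be a real Banach space, τ > 0, m ∈ ℕ, 𝓕 : C([-τ,0], E) → E, and 𝓖 : C([-τ,0], E) → L(ℝᵐ, E). Let u : ℝ → ℝᵐ be a control signal and let x : ℝ → E be continuously differentiable satisfying the closed-loop dynamics ẋ(t) = 𝓕(x_t) + 𝓖(x_t)(u(t)) for all t ≥ 0, where x_t(θ) = x(t+θ). Let 𝓗 : C([-τ,0], E) → ℝ be Fréchet differentiable and let α : ℝ → ℝ be continuous, strictly increasing with α(0) = 0. Suppose the controller satisfies the control-barrier-functional condition along the solution: for all t ≥ 0, D𝓗(x_t)(ẋ_t) ≥ -α(𝓗(x_t)), where ẋ_t(θ) = x'(t+θ). If 𝓗(x_0) ≥ 0, then 𝓗(x_t) ≥ 0 for all t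 ≥ 0; that is, the safe set 𝓢 = {φ ∈ C([-τ,0], E) : 𝓗(φ) ≥ 0} is rendered forward invariant. -/
lemma histSegment_hasDerivAt {E : Type*} [NormedAddCommGroup E] [NormedSpace ℝ E]
    (τ : ℝ) (hτ : 0 < τ) (x x' : ℝ → E) (hx : Continuous x) (hx' : Continuous x')
    (hd : ∀ t : ℝ, HasDerivAt x (x' t) t) (t : ℝ) :
    HasDerivAt (fun s => histSegment τ x hx s) (histSegment τ x' hx' t) t := by
  rw [hasDerivAt_iff_isLittleO, Asymptotics.isLittleO_iff]
  intro c hc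
  -- uniform continuity of x' on a compact neighborhood
  set K : Set ℝ := Set.Icc (t - 1 - τ) (t + 1) with hK
  have hKc : IsCompact K := isCompact_Icc
  have huc : UniformContinuousOn x' K :=
    hKc.uniformContinuousOn_of_continuous hx'.continuousOn
  rw [Metric.uniformContinuousOn_iff] at huc
  obtain ⟨δ, hδ, hδ'⟩ := huc c hc
  rw [Metric.eventually_nhds_iff]
  refine ⟨min δ 1, lt_min hδ one_pos, ?_⟩
  intro s hs
  rw [Real.dist_eq] at hs
  have hs1 : |s - t| < 1 := lt_of_lt_of_le hs (min_le_right _ _)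
  have hsδ : |s - t| < δ := lt_of_lt_of_le hs (min_le_left _ _)
  have hnn : (0:ℝ) ≤ c * ‖s - t‖ := mul_nonneg hc.le (norm_nonneg _)
  rw [Real.norm_eq_abs] at hnn ⊢
  apply (ContinuousMap.norm_le _ hnn).2
  intro θ
  -- pointwise estimate via the mean value inequality
  have hθ := θ.2
  simp only [Set.mem_Icc] at hθ
  set v : E := x' (t + θ) with hv
  set f : ℝ → E := fun r => x (r + θ) - r • v with hf
  set f' : ℝ → E := fun r => x' (r + θ) - v with hf'
  set S : Set ℝ := Set.Icc (min s t) (max s t) with hS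
  have hmem : ∀ r ∈ S, |r - t| ≤ |s - t| := by
    intro r hr
    rcases le_total s t with h | h
    · have hsr : s ≤ r := le_trans (le_inf (le_refl s) h) hr.1
      have hrt' : r ≤ t := le_trans hr.2 (sup_le h (le_refl t))
      rw [abs_of_nonpos (by linarith), abs_of_nonpos (by linarith)]
      linarith
    · have htr : t ≤ r := le_trans (le_inf h (le_refl t)) hr.1
      have hrs : r ≤ s := le_trans hr.2 (sup_le (le_refl s) h)
      rw [abs_of_nonneg (by linarith), abs_of_nonneg (by linarith)]
      linarith
  have hderiv : ∀ r ∈ S, HasDerivWithinAt f (f' r) S r := by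
    intro r _
    have hadd : HasDerivAt (fun r : ℝ => r + (θ:ℝ)) 1 r :=
      (hasDerivAt_id' r).add_const (θ:ℝ)
    have h1 : HasDerivAt (fun r : ℝ => x (r + (θ:ℝ))) (x' (r + (θ:ℝ))) r := by
      simpa [Function.comp_def] using HasDerivAt.scomp (𝕜 := ℝ) r (hd (r + (θ:ℝ))) hadd
    have h2 : HasDerivAt (fun r : ℝ => r • v) v r := by
      simpa using (hasDerivAt_id' r).smul_const v
    exact (h1.sub h2).hasDerivWithinAt
  have hbound : ∀ r ∈ S, ‖f' r‖ ≤ c := by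
    intro r hr
    have hrt := hmem r hr
    have h1 := abs_le.1 (hrt.trans hs1.le)
    have hrK : r + (θ:ℝ) ∈ K := by
      constructor <;> [linarith [h1.1, hθ.1]; linarith [h1.2, hθ.2]]
    have htK : t + (θ:ℝ) ∈ K := by
      constructor <;> [linarith [hθ.1]; linarith [hθ.2]]
    have hdst : dist (r + (θ:ℝ)) (t + (θ:ℝ)) < δ := by
      rw [Real.dist_eq]
      simpa using lt_of_le_of_lt hrt hsδ
    have := hδ' _ hrK _ htK hdst
    rw [dist_eq_norm] at this
    exact this.le
  have hsS : s ∈ S := ⟨inf_le_left, le_sup_left⟩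
  have htS : t ∈ S := ⟨inf_le_right, le_sup_right⟩
  have key := (convex_Icc _ _).norm_image_sub_le_of_norm_hasDerivWithin_le
    hderiv hbound htS hsS
  have heq : f s - f t = x (s + θ) - x (t + θ) - (s - t) • v := by
    simp only [hf, sub_smul]; abel
  rw [heq] at key
  simp only [Real.norm_eq_abs] at key
  calc ‖(histSegment τ x hx s - histSegment τ x hx t -
        (s - t) • histSegment τ x' hx' t) θ‖
      = ‖x (s + θ) - x (t + θ) - (s - t) • v‖ := by
        simp [histSegment, hv]
    _ ≤ c * |s - t| := key

lemma barrier_comparison {h h' : ℝ → ℝ} (hd : ∀ t, HasDerivAt h (h' t) t)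
    {α : ℝ → ℝ} (hα_mono : StrictMono α) (hα0 : α 0 = 0)
    (hge : ∀ t ≥ (0:ℝ), h' t ≥ -α (h t)) (h0 : h 0 ≥ 0) :
    ∀ t ≥ (0:ℝ), h t ≥ 0 := by
  intro t₁ ht₁
  by_contra hneg
  push_neg at hneg
  have hcont : Continuous h := by
    rw [continuous_iff_continuousAt]
    exact fun r => (hd r).continuousAt
  set S : Set ℝ := Set.Icc 0 t₁ ∩ h ⁻¹' Set.Ici 0 with hSdef
  have hSne : (0:ℝ) ∈ S := ⟨⟨le_refl 0, ht₁⟩, h0⟩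
  have hSclosed : IsClosed S := isClosed_Icc.inter (isClosed_Ici.preimage hcont)
  have hSbdd : BddAbove S := ⟨t₁, fun r hr => hr.1.2⟩
  set s := sSup S with hsdef
  have hsS : s ∈ S := hSclosed.csSup_mem ⟨0, hSne⟩ hSbdd
  have hs0 : 0 ≤ s := hsS.1.1
  have hst₁ : s ≤ t₁ := hsS.1.2
  have hhs : 0 ≤ h s := hsS.2
  have hslt : s < t₁ := lt_of_le_of_ne hst₁ (by
    intro he; rw [he] at hhs; linarith)
  have hneg' : ∀ r ∈ Set.Ioc s t₁, h r < 0 := by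
    intro r hr
    by_contra hge'
    push_neg at hge'
    have hrS : r ∈ S := ⟨⟨le_trans hs0 hr.1.le, hr.2⟩, hge'⟩
    exact absurd (le_csSup hSbdd hrS) (not_le.2 hr.1)
  have hmono : StrictMonoOn h (Set.Icc s t₁) := by
    apply strictMonoOn_of_deriv_pos (convex_Icc s t₁) hcont.continuousOn
    intro r hr
    rw [interior_Icc] at hr
    rw [(hd r).deriv]
    have hr0 : h r < 0 := hneg' r ⟨hr.1, hr.2.le⟩
    have hα : α (h r) < 0 := by rw [← hα0]; exact hα_mono hr0
    have := hge r (le_trans hs0 hr.1.le)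
    linarith
  have := hmono ⟨le_refl s, hst₁⟩ ⟨hst₁, le_refl t₁⟩ hslt
  linarith [hneg' t₁ ⟨hslt, le_refl t₁⟩]

/-- Theorem 5: safety-critical control of time delay systems via control barrier
functionals. If `x` satisfies the closed loop `ẋ(t) = 𝓕(x_t) + 𝓖(x_t)(u(t))` for
`t ≥ 0`, `𝓗` is Fréchet differentiable, `α` is continuous, strictly increasing with
`α 0 = 0`, and along the solution the control-barrier-functional condition
`D𝓗(x_t)(ẋ_t) ≥ -α(𝓗(x_t))` holds for all `t ≥ 0`, then `𝓗(x_0) ≥ 0` implies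
`𝓗(x_t) ≥ 0` for all `t ≥ 0`: the safe set is rendered forward invariant. -/
theorem statement10 (E : Type*) [NormedAddCommGroup E] [NormedSpace ℝ E] [CompleteSpace E]
    (τ : ℝ) (hτ : 0 < τ) (m : ℕ)
    (F : C(Set.Icc (-τ) (0 : ℝ), E) → E)
    (G : C(Set.Icc (-τ) (0 : ℝ), E) → (EuclideanSpace ℝ (Fin m) →L[ℝ] E))
    (u : ℝ → EuclideanSpace ℝ (Fin m))
    (x x' : ℝ → E) (hx : Continuous x) (hx' : Continuous x')
    (hd : ∀ t : ℝ, HasDerivAt x (x' t) t)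
    (hode : ∀ t ≥ (0 : ℝ),
      x' t = F (histSegment τ x hx t) + G (histSegment τ x hx t) (u t))
    (H : C(Set.Icc (-τ) (0 : ℝ), E) → ℝ)
    (DH : C(Set.Icc (-τ) (0 : ℝ), E) → (C(Set.Icc (-τ) (0 : ℝ), E) →L[ℝ] ℝ))
    (hH : ∀ φ : C(Set.Icc (-τ) (0 : ℝ), E), HasFDerivAt H (DH φ) φ)
    (α : ℝ → ℝ) (hα_cont : Continuous α) (hα_mono : StrictMono α) (hα0 : α 0 = 0)
    (hsafe : ∀ t ≥ (0 : ℝ),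
      DH (histSegment τ x hx t) (histSegment τ x' hx' t) ≥ -α (H (histSegment τ x hx t)))
    (h0 : H (histSegment τ x hx 0) ≥ 0) :
    ∀ t ≥ (0 : ℝ), H (histSegment τ x hx t) ≥ 0 := by
  have hX : ∀ t : ℝ, HasDerivAt (fun s => histSegment τ x hx s)
      (histSegment τ x' hx' t) t :=
    histSegment_hasDerivAt τ hτ x x' hx hx' hd
  have hcomp : ∀ t : ℝ, HasDerivAt (fun s => H (histSegment τ x hx s))
      (DH (histSegment τ x hx t) (histSegment τ x' hx' t)) t :=
    fun t => (hH (histSegment τ x hx t)).comp_hasDerivAt t (hX t)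
  exact barrier_comparison hcomp hα_mono hα0 hsafe h0
end

section
/- (Theorem 6, extended control barrier functionals for delay-induced relative degree 2) Let E be a real Banach space, τ > 0, and let x : ℝ → E be continuously differentiable with history segments x_t(θ) = x(t+θ) in C([-τ,0], E). Let 𝓗, 𝓗ₑ : C([-τ,0], E) → ℝ, and let α, αₑ : ℝ → ℝ be continuous, strictly increasing with α(0) = 0 and αₑ(0) = 0. Suppose that for all t ≥ 0: (i) the function t ↦ 𝓗(x_t) is differentiable with derivative equal to 𝓗ₑ(x_t) − α(𝓗(x_t)) (i.e., 𝓗ₑ = 𝓗̇ + α∘𝓗 along the solution); and (ii) the function t ↦ 𝓗ₑ(x_t) is differentiable with derivative ≥ -αₑ(𝓗ₑ(x_t)). If 𝓗(x_0) ≥ 0 and 𝓗ₑ(x_0) ≥ 0, then for all t ≥ 0 both 𝓗(x_t) ≥ 0 and 𝓗ₑ(x_t) ≥ 0; that is, the intersection 𝓢 ∩ 𝓢ₑ of the 0-superlevel sets of 𝓗 and 𝓗ₑ is forward invariant along the solution. -/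
/-- Comparison lemma: if `f' ≥ -β ∘ f` on `[0,∞)` with `β` strictly
increasing and `β 0 = 0`, and `f 0 ≥ 0`, then `f ≥ 0` on `[0,∞)`. -/
lemma key_nonneg (f β : ℝ → ℝ) (hβ : StrictMono β) (hβ0 : β 0 = 0)
    (hf : ∀ t ≥ (0:ℝ), ∃ d, HasDerivAt f d t ∧ d ≥ -β (f t)) (h0 : 0 ≤ f 0) :
    ∀ t ≥ (0:ℝ), 0 ≤ f t := by
  have hcont : ContinuousOn f (Set.Ici 0) := fun t ht =>
    ((hf t ht).choose_spec.1.continuousAt).continuousWithinAt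
  intro t1 ht1
  by_contra hneg
  push_neg at hneg
  set S : Set ℝ := Set.Icc 0 t1 ∩ f ⁻¹' Set.Ici 0 with hSdef
  have hS0 : (0:ℝ) ∈ S := ⟨⟨le_refl 0, ht1⟩, h0⟩
  have hScl : IsClosed S :=
    (hcont.mono Set.Icc_subset_Ici_self).preimage_isClosed_of_isClosed
      isClosed_Icc isClosed_Ici
  have hScp : IsCompact S :=
    isCompact_Icc.of_isClosed_subset hScl Set.inter_subset_left
  have hSne : S.Nonempty := ⟨0, hS0⟩
  set t0 : ℝ := sSup S with ht0def
  have ht0S : t0 ∈ S := hScp.sSup_mem hSne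
  obtain ⟨⟨ht00, ht01⟩, ht0f⟩ := ht0S
  have ht0lt : t0 < t1 := lt_of_le_of_ne ht01 (by
    intro h; rw [h] at ht0f; exact absurd ht0f (not_le.mpr hneg))
  have hnegOn : ∀ t ∈ Set.Ioc t0 t1, f t < 0 := by
    intro t ⟨htl, htr⟩
    by_contra h
    push_neg at h
    have : t ∈ S := ⟨⟨le_trans ht00 htl.le, htr⟩, h⟩
    exact absurd (le_csSup (hScp.bddAbove) this) (not_le.mpr htl)
  have hmono : StrictMonoOn f (Set.Icc t0 t1) := by
    apply strictMonoOn_of_deriv_pos (convex_Icc t0 t1)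
    · exact hcont.mono (fun t ht => le_trans ht00 ht.1)
    · intro t ht
      rw [interior_Icc] at ht
      obtain ⟨d, hd, hdge⟩ := hf t (le_trans ht00 ht.1.le)
      rw [hd.deriv]
      have hft : f t < 0 := hnegOn t ⟨ht.1, ht.2.le⟩
      have : β (f t) < 0 := hβ0 ▸ hβ hft
      linarith
  have h1 : f t0 < f t1 := hmono ⟨le_refl t0, ht01⟩ ⟨ht0lt.le, le_refl t1⟩ ht0lt
  have h2 : (0:ℝ) ≤ f t0 := ht0f
  linarith

/-- Theorem 6: extended control barrier functionals for delay-induced relative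
degree 2. If along the solution `t ↦ 𝓗(x_t)` is differentiable with derivative
`𝓗ₑ(x_t) − α(𝓗(x_t))` (i.e. `𝓗ₑ = 𝓗̇ + α ∘ 𝓗`), and `t ↦ 𝓗ₑ(x_t)` is
differentiable with derivative `≥ -αₑ(𝓗ₑ(x_t))`, then `𝓗(x_0) ≥ 0` and
`𝓗ₑ(x_0) ≥ 0` imply `𝓗(x_t) ≥ 0` and `𝓗ₑ(x_t) ≥ 0` for all `t ≥ 0`. -/
theorem statement12 (E : Type*) [NormedAddCommGroup E] [NormedSpace ℝ E] [CompleteSpace E]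
    (τ : ℝ) (hτ : 0 < τ)
    (x : ℝ → E) (hx : Continuous x)
    (hxd : ContDiff ℝ 1 x)
    (H He : C(Set.Icc (-τ) (0 : ℝ), E) → ℝ)
    (α αe : ℝ → ℝ)
    (hα_cont : Continuous α) (hα_mono : StrictMono α) (hα0 : α 0 = 0)
    (hαe_cont : Continuous αe) (hαe_mono : StrictMono αe) (hαe0 : αe 0 = 0)
    (hH : ∀ t ≥ (0 : ℝ), HasDerivAt (fun s => H (histSegment τ x hx s))
      (He (histSegment τ x hx t) - α (H (histSegment τ x hx t))) t)
    (hHe : ∀ t ≥ (0 : ℝ), ∃ d : ℝ,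
      HasDerivAt (fun s => He (histSegment τ x hx s)) d t ∧
        d ≥ -αe (He (histSegment τ x hx t)))
    (h0 : H (histSegment τ x hx 0) ≥ 0) (he0 : He (histSegment τ x hx 0) ≥ 0) :
    ∀ t ≥ (0 : ℝ), H (histSegment τ x hx t) ≥ 0 ∧ He (histSegment τ x hx t) ≥ 0 := by
  have he : ∀ s ≥ (0:ℝ), 0 ≤ He (histSegment τ x hx s) :=
    key_nonneg _ αe hαe_mono hαe0 hHe he0
  have hh : ∀ s ≥ (0:ℝ), 0 ≤ H (histSegment τ x hx s) := by
    refine key_nonneg _ α hα_mono hα0 (fun s hs => ⟨_, hH s hs, ?_⟩) h0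
    have := he s hs
    linarith
  exact fun t ht => ⟨hh t ht, he t ht⟩
end
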